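/- If G is a connected graph of order at least 3, then there exists a (not necessarily induced) star subgraph S on at least 3 vertices (i.e., a vertex x together with at least two of its neighbors) such that G − V(S) has at most one component containing an edge. -/

import Mathlib

open SimpleGraph

section Aux
variable {V : Type*} {G : SimpleGraph V}

def RW (G : SimpleGraph V) (B : Set V) (u v : V) : Prop :=
  ∃ p : G.Walk u v, ∀ w ∈ p.support, w ∈ B

def PathO (G : SimpleGraph V) (A : Set V) (r : V) : Prop :=
  ∃ l : List V, l.Chain' G.Adj ∧ l.Nodup ∧ {y | y ∈ l} = A ∧ l.head? = some r

def StarO (G : SimpleGraph V) (A : Set V) (r : V) : Prop :=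
  ∃ x L, x ∈ A ∧ L ⊆ A ∧ (∀ y ∈ L, G.Adj x y) ∧ 2 ≤ L.ncard ∧
    ∀ u v, u ∈ A \ ({x} ∪ L) → v ∈ A \ ({x} ∪ L) → G.Adj u v →
      RW G (A \ ({x} ∪ L)) u r

variable {B B' : Set V} {u v w : V}

lemma rw_refl (h : u ∈ B) : RW G B u u := ⟨Walk.nil, by simpa using h⟩

lemma rw_left (h : RW G B u v) : u ∈ B := by
  obtain ⟨p, hp⟩ := h; exact hp u p.start_mem_support

lemma rw_right (h : RW G B u v) : v ∈ B := by
  obtain ⟨p, hp⟩ := h; exact hp v p.end_mem_support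

lemma rw_symm (h : RW G B u v) : RW G B v u := by
  obtain ⟨p, hp⟩ := h
  exact ⟨p.reverse, by intro w hw; exact hp w (by simpa [Walk.support_reverse] using hw)⟩

lemma rw_trans (h : RW G B u v) (h' : RW G B v w) : RW G B u w := by
  obtain ⟨p, hp⟩ := h; obtain ⟨q, hq⟩ := h'
  refine ⟨p.append q, ?_⟩
  intro x hx
  rcases (Walk.mem_support_append_iff _ _).1 hx with h | h
  · exact hp x h
  · exact hq x h

lemma rw_adj (h : G.Adj u v) (hu : u ∈ B) (hv : v ∈ B) : RW G B u v :=
  ⟨h.toWalk, by intro w hw; rcases by simpa using hw with rfl | rfl <;> assumption⟩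

lemma rw_mono (hB : B ⊆ B') (h : RW G B u v) : RW G B' u v := by
  obtain ⟨p, hp⟩ := h; exact ⟨p, fun w hw => hB (hp w hw)⟩

lemma rw_closure (h : RW G B u v) : RW G {w | RW G B u w} u v := by
  classical
  obtain ⟨p, hp⟩ := h
  refine ⟨p, fun w hw => ⟨p.takeUntil w hw, fun x hx => hp x (Walk.support_takeUntil_subset _ _ hx)⟩⟩

lemma rw_reachable (h : RW G B u v) (hu : u ∈ B) (hv : v ∈ B) :
    (G.induce B).Reachable ⟨u, hu⟩ ⟨v, hv⟩ := by
  obtain ⟨p, hp⟩ := h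
  induction p with
  | nil => rfl
  | @cons a b c hab q ih =>
      have hb : b ∈ B := hp b (by simp)
      have h1 : (G.induce B).Adj ⟨a, hu⟩ ⟨b, hb⟩ := hab
      exact (h1.reachable).trans (ih hb hv (fun w hw => hp w (by simp [hw])))

lemma chain_rw : ∀ (l : List V), l.Chain' G.Adj → ∀ s, l.head? = some s →
    ∀ w ∈ l, RW G {y | y ∈ l} s w := by
  intro l
  induction l with
  | nil => intro _ s hs; simp at hs
  | cons x t ih =>
      intro hc s hs w hw
      have hsx : s = x := by simpa using hs.symm
      subst hsx
      rcases hw with _ | hw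
      · exact ⟨Walk.nil, by simp⟩
      · rename_i hw
        match t, hc, hw with
        | y :: t', hc, hw =>
          have hadj : G.Adj s y ∧ (y :: t').Chain' G.Adj := by
            unfold List.Chain' at hc; rw [List.isChain_cons_cons] at hc; exact hc
          have h1 : RW G {z | z ∈ (y :: t')} y w := ih hadj.2 y rfl w hw
          have h2 : RW G {z | z ∈ (s :: y :: t')} y w := by
            obtain ⟨p, hp⟩ := h1
            exact ⟨p, fun a ha => by simpa using Or.inr (hp a ha)⟩
          obtain ⟨p, hp⟩ := h2
          exact ⟨Walk.cons hadj.1 p, by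
            intro a ha
            rcases (by simpa using ha : a = s ∨ a ∈ p.support) with rfl | ha'
            · simp
            · exact hp a ha'⟩

lemma path_to_star {A : Set V} {r : V} (h : PathO G A r) (h3 : 3 ≤ A.ncard) :
    StarO G A r := by
  classical
  obtain ⟨l, hc, hnd, hset, hhead⟩ := h
  have hlen : 3 ≤ l.length := by
    have h1 : {y | y ∈ l} = (↑l.toFinset : Set V) := by
      ext y; simp
    have h2 : A.ncard = l.length := by
      rw [← hset, h1, Set.ncard_coe_finset, List.toFinset_card_of_nodup hnd]
    omega
  -- decompose l = l₁ ++ [a, b, c]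
  obtain ⟨l₁, a, b, c, hl⟩ : ∃ (l₁ : List V) (a b c : V), l = l₁ ++ [a, b, c] := by
    have hrl : l = l.reverse.reverse := by simp
    rcases hrev : l.reverse with _ | ⟨c, _ | ⟨b, _ | ⟨a, m⟩⟩⟩
    · exfalso
      have h4 := congrArg List.length hrev
      rw [List.length_reverse] at h4; simp only [List.length_cons, List.length_nil] at h4; omega
    · exfalso
      have h4 := congrArg List.length hrev
      rw [List.length_reverse] at h4; simp only [List.length_cons, List.length_nil] at h4; omega
    · exfalso
      have h4 := congrArg List.length hrev
      rw [List.length_reverse] at h4; simp only [List.length_cons, List.length_nil] at h4; omega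
    · refine ⟨m.reverse, a, b, c, ?_⟩
      rw [hrl, hrev]; simp
  subst hl
  have hc' := List.isChain_append.1 hc
  have hadj_ab : G.Adj a b := by
    have := hc'.2.1; rw [List.isChain_cons_cons] at this; exact this.1
  have hadj_bc : G.Adj b c := by
    have := hc'.2.1; rw [List.isChain_cons_cons] at this
    have := this.2; rw [List.isChain_cons_cons] at this; exact this.1
  have hnd' := List.nodup_append.1 hnd
  have hab : a ≠ b := by have := hnd'.2.1; simp at this; tauto
  have hbc : b ≠ c := by have := hnd'.2.1; simp at this; tauto
  have hac : a ≠ c := by have := hnd'.2.1; simp at this; tauto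
  have hdisj : ∀ y ∈ l₁, y ≠ a ∧ y ≠ b ∧ y ≠ c := by
    intro y hy
    have := hnd'.2.2
    refine ⟨?_, ?_, ?_⟩ <;> rintro rfl <;> exact this _ hy _ (by simp) rfl
  have hSd : A \ ({b} ∪ {a, c}) = {y | y ∈ l₁} := by
    ext y
    simp only [← hset, Set.mem_diff, Set.mem_setOf_eq, List.mem_append, Set.mem_union,
      Set.mem_singleton_iff, Set.mem_insert_iff, List.mem_cons, List.not_mem_nil]
    constructor
    · rintro ⟨h1 | h1, h2⟩
      · exact h1
      · exfalso; simp at h1; tauto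
    · intro hy
      have := hdisj y hy
      tauto
  refine ⟨b, {a, c}, ?_, ?_, ?_, ?_, ?_⟩
  · rw [← hset]; simp
  · rw [← hset]; intro y hy; rcases hy with rfl | rfl <;> simp
  · intro y hy; rcases hy with rfl | rfl
    · exact hadj_ab.symm
    · exact hadj_bc
  · rw [Set.ncard_pair hac]
  · intro u v hu hv huv
    rw [hSd] at hu hv ⊢
    have hl₁ne : l₁ ≠ [] := by rintro rfl; simp at hu
    have hhead' : l₁.head? = some r := by
      rcases l₁ with _ | ⟨x, t⟩
      · simp at hl₁ne
      · simpa using hhead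
    exact rw_symm (chain_rw l₁ hc'.1 r hhead' u hu)

lemma exists_root_aux {A : Set V} {r : V} : ∀ {a b : V} (p : G.Walk a b), b = r →
    (∀ w ∈ p.support, w ∈ A) → a ≠ r → ∃ s, G.Adj r s ∧ RW G (A \ {r}) a s := by
  intro a b p
  induction p with
  | nil => intro hb _ hne; exact absurd hb hne
  | @cons a' b' c' hadj q ih =>
      intro hc hp hne
      have ha : a' ∈ A := hp a' (by simp)
      by_cases hb : b' = r
      · subst hc; subst hb
        exact ⟨a', hadj.symm, rw_refl ⟨ha, hne⟩⟩
      · obtain ⟨s, h1, h2⟩ := ih hc (fun w hw => hp w (by simp [hw])) hb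
        have hbr : b' ∈ A \ {r} := ⟨hp b' (by simp), hb⟩
        exact ⟨s, h1, rw_trans (rw_adj hadj ⟨ha, hne⟩ hbr) h2⟩

lemma exists_root {A : Set V} {r u : V} (H : ∀ v ∈ A, RW G A r v) (hu : u ∈ A \ {r}) :
    ∃ s, G.Adj r s ∧ RW G (A \ {r}) u s := by
  obtain ⟨p, hp⟩ := rw_symm (H u hu.1)
  exact exists_root_aux p rfl hp hu.2

lemma star_lift {A : Set V} {r u s : V} (hr : r ∈ A)
    (H : ∀ v ∈ A, RW G A r v) (hs : G.Adj r s)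
    (hsC : RW G (A \ {r}) u s)
    (hstar : StarO G {w | RW G (A \ {r}) u w} s) :
    StarO G A r := by
  set C : Set V := {w | RW G (A \ {r}) u w} with hC
  have hCA : C ⊆ A \ {r} := fun w hw => rw_right hw
  obtain ⟨x, L, hxC, hLC, hadjL, hL2, hcond⟩ := hstar
  set S : Set V := {x} ∪ L with hSdef
  have hSC : S ⊆ C := by
    rintro y (rfl | hy)
    · exact hxC
    · exact hLC hy
  have hrS : r ∈ A \ S := ⟨hr, fun h => (hCA (hSC h)).2 rfl⟩
  refine ⟨x, L, (hCA hxC).1, fun y hy => (hCA (hLC hy)).1, hadjL, hL2, ?_⟩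
  intro u1 v1 hu1 hv1 hadj1
  by_cases h1 : u1 = r
  · subst h1; exact rw_refl hrS
  by_cases h2 : u1 ∈ C
  · by_cases h3 : v1 = r
    · subst h3; exact rw_adj hadj1 hu1 hv1
    · have hv1' : v1 ∈ C := rw_trans h2 (rw_adj hadj1 (hCA h2) ⟨hv1.1, h3⟩)
      have := hcond u1 v1 ⟨h2, hu1.2⟩ ⟨hv1', hv1.2⟩ hadj1
      have hsCS : s ∈ C \ S := rw_right this
      have hmono : C \ S ⊆ A \ S := fun w hw => ⟨(hCA hw.1).1, hw.2⟩
      exact rw_trans (rw_mono hmono this)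
        (rw_adj hs.symm ⟨(hCA hsCS.1).1, hsCS.2⟩ hrS)
  · have hu1' : u1 ∈ A \ {r} := ⟨hu1.1, h1⟩
    obtain ⟨s1, hs1, hs1'⟩ := exists_root H hu1'
    have hdisj : {w | RW G (A \ {r}) u1 w} ⊆ A \ S := by
      intro w hw
      refine ⟨(rw_right hw).1, fun hwS => h2 ?_⟩
      exact rw_trans (hSC hwS) (rw_symm hw)
    have h4 : RW G (A \ S) u1 s1 := rw_mono hdisj (rw_closure hs1')
    exact rw_trans h4 (rw_adj hs1.symm (rw_right h4) hrS)

variable [Fintype V]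

lemma strongMain : ∀ (n : ℕ) (A : Set V) (r : V), A.ncard ≤ n → r ∈ A →
    (∀ v ∈ A, RW G A r v) → PathO G A r ∨ StarO G A r := by
  intro n
  induction n with
  | zero =>
      intro A r hle hr _
      exfalso
      have : A = ∅ := Set.ncard_eq_zero (A.toFinite) |>.1 (Nat.le_zero.1 hle)
      simp [this] at hr
  | succ n ih =>
      intro A r hle hr H
      classical
      by_cases hA'e : A \ {r} = ∅
      · left
        refine ⟨[r], List.isChain_singleton _, by simp, ?_, rfl⟩
        have h1 : A ⊆ {r} := Set.diff_eq_empty.1 hA'e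
        ext y
        simp only [Set.mem_setOf_eq, List.mem_singleton]
        exact ⟨fun h => h ▸ hr, fun hy => h1 hy⟩
      · -- components: C u = reachability class of u in A \ {r}
        have hCsub : ∀ u : V, {w | RW G (A \ {r}) u w} ⊆ A \ {r} :=
          fun u w hw => rw_right hw
        have hCn : ∀ u : V, ({w | RW G (A \ {r}) u w}).ncard ≤ n := by
          intro u
          have h1 : ({w | RW G (A \ {r}) u w}).ncard ≤ (A \ {r}).ncard :=
            Set.ncard_le_ncard (hCsub u) (A \ {r}).toFinite
          have h2 : (A \ {r}).ncard < A.ncard :=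
            Set.ncard_diff_singleton_lt_of_mem hr A.toFinite
          omega
        have hCconn : ∀ u ∈ A \ {r}, ∀ s, RW G (A \ {r}) u s →
            ∀ v ∈ {w | RW G (A \ {r}) u w}, RW G {w | RW G (A \ {r}) u w} s v := by
          intro u hu s hs v hv
          exact rw_trans (rw_symm (rw_closure hs)) (rw_closure hv)
        have hres : ∀ u ∈ A \ {r}, ∀ s, RW G (A \ {r}) u s →
            PathO G {w | RW G (A \ {r}) u w} s ∨ StarO G {w | RW G (A \ {r}) u w} s := by
          intro u hu s hs
          exact ih _ s (hCn u) hs (hCconn u hu s hs)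
        by_cases hstar : ∃ u ∈ A \ {r}, ∃ s, G.Adj r s ∧ RW G (A \ {r}) u s ∧
            StarO G {w | RW G (A \ {r}) u w} s
        · obtain ⟨u, hu, s, h1, h2, h3⟩ := hstar
          exact Or.inr (star_lift hr H h1 h2 h3)
        · push_neg at hstar
          have hpath : ∀ u ∈ A \ {r}, ∀ s, G.Adj r s → RW G (A \ {r}) u s →
              PathO G {w | RW G (A \ {r}) u w} s := by
            intro u hu s h1 h2
            rcases hres u hu s h2 with h | h
            · exact h
            · exact absurd h (hstar u hu s h1 h2)
          obtain ⟨u0, hu0⟩ := Set.nonempty_iff_ne_empty.2 hA'e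
          obtain ⟨s0, hs0, hs0'⟩ := exists_root H hu0
          by_cases hone : ∀ v ∈ A \ {r}, RW G (A \ {r}) u0 v
          · -- single component: prepend r to its path
            left
            obtain ⟨l, hc, hnd, hset, hhead⟩ := hpath u0 hu0 s0 hs0 hs0'
            have hsetA : {y | y ∈ l} = A \ {r} := by
              rw [hset]
              exact Set.Subset.antisymm (hCsub u0) (fun v hv => hone v hv)
            rcases l with _ | ⟨x, t⟩
            · simp at hhead
            · have hx : x = s0 := by simpa using hhead
              refine ⟨r :: x :: t, ?_, ?_, ?_, rfl⟩
              · unfold List.Chain'; rw [List.isChain_cons_cons]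
                exact ⟨hx ▸ hs0, hc⟩
              · refine List.nodup_cons.2 ⟨?_, hnd⟩
                intro hmem
                have : r ∈ A \ {r} := by rw [← hsetA]; exact hmem
                exact this.2 rfl
              · ext y
                simp only [Set.mem_setOf_eq, List.mem_cons]
                constructor
                · rintro (rfl | h)
                  · exact hr
                  · have hy2 : y ∈ {z | z ∈ x :: t} := by simpa using h
                    exact (by rw [hsetA] at hy2; exact hy2 : y ∈ A \ {r}).1
                · intro hy
                  by_cases hyr : y = r
                  · exact Or.inl hyr
                  · right
                    have h5 : y ∈ {z | z ∈ x :: t} := by rw [hsetA]; exact ⟨hy, hyr⟩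
                    simpa using h5
          · push_neg at hone
            obtain ⟨u1, hu1, hnr⟩ := hone
            by_cases hbig : ∃ u ∈ A \ {r}, 3 ≤ ({w | RW G (A \ {r}) u w}).ncard
            · obtain ⟨u, hu, h3⟩ := hbig
              obtain ⟨s, hs, hs'⟩ := exists_root H hu
              exact Or.inr (star_lift hr H hs hs'
                (path_to_star (hpath u hu s hs hs') h3))
            · push_neg at hbig
              right
              obtain ⟨s1, hs1, hs1'⟩ := exists_root H hu1
              set L : Set V := {y | y ∈ A \ {r} ∧ G.Adj r y} with hL
              have hs0L : s0 ∈ L := ⟨rw_right hs0', hs0⟩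
              have hs1L : s1 ∈ L := ⟨rw_right hs1', hs1⟩
              have hne01 : s0 ≠ s1 := by
                rintro rfl
                exact hnr (rw_trans hs0' (rw_symm hs1'))
              have hL2 : 2 ≤ L.ncard := by
                rw [show (2:ℕ) = 1 + 1 by rfl]
                refine (Set.one_lt_ncard_iff L.toFinite).2 ⟨s0, s1, hs0L, hs1L, hne01⟩
              refine ⟨r, L, hr, fun y hy => hy.1.1, fun y hy => hy.2, hL2, ?_⟩
              intro u v hu hv hadj
              exfalso
              have hu' : u ∈ A \ {r} := ⟨hu.1, fun h => hu.2 (Or.inl h)⟩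
              have hv' : v ∈ A \ {r} := ⟨hv.1, fun h => hv.2 (Or.inl h)⟩
              have hur : ¬ G.Adj r u := fun h => hu.2 (Or.inr ⟨hu', h⟩)
              have hvr : ¬ G.Adj r v := fun h => hv.2 (Or.inr ⟨hv', h⟩)
              obtain ⟨su, hsu, hsu'⟩ := exists_root H hu'
              have h1 : u ∈ {w | RW G (A \ {r}) u w} := rw_refl hu'
              have h2 : v ∈ {w | RW G (A \ {r}) u w} := rw_adj hadj hu' hv'
              have h3 : su ∈ {w | RW G (A \ {r}) u w} := hsu'
              have hsuu : su ≠ u := fun h => hur (h ▸ hsu)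
              have hsuv : su ≠ v := fun h => hvr (h ▸ hsu)
              have huv : u ≠ v := hadj.ne
              have hsub : ({u, v, su} : Set V) ⊆ {w | RW G (A \ {r}) u w} := by
                rintro y (rfl | rfl | rfl) <;> assumption
              have hcard : ({u, v, su} : Set V).ncard = 3 := by
                rw [Set.ncard_insert_of_notMem (by simp [huv, hsuu.symm]),
                  Set.ncard_insert_of_notMem (by simp [hsuv.symm]), Set.ncard_singleton]
              have := Set.ncard_le_ncard hsub ({w | RW G (A \ {r}) u w}).toFinite
              have := hbig u hu'
              omega
end Aux

theorem stmt5 {V : Type*} [Fintype V] (G : SimpleGraph V)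
    (hconn : G.Connected) (hcard : 3 ≤ Fintype.card V) :
    ∃ (x : V) (L : Set V), L ⊆ G.neighborSet x ∧ 2 ≤ L.ncard ∧
      ∀ c d : (G.induce (({x} ∪ L : Set V))ᶜ).ConnectedComponent,
        (∃ u v, (G.induce (({x} ∪ L : Set V))ᶜ).Adj u v ∧
          (G.induce (({x} ∪ L : Set V))ᶜ).connectedComponentMk u = c) →
        (∃ u v, (G.induce (({x} ∪ L : Set V))ᶜ).Adj u v ∧
          (G.induce (({x} ∪ L : Set V))ᶜ).connectedComponentMk u = d) →
        c = d := by
  classical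
  have hne : Nonempty V := Fintype.card_pos_iff.1 (by omega)
  obtain ⟨r⟩ := hne
  have hncard : (Set.univ : Set V).ncard = Fintype.card V := by
    rw [Set.ncard_univ, Nat.card_eq_fintype_card]
  have H : ∀ v ∈ (Set.univ : Set V), RW G Set.univ r v := by
    intro v _
    obtain ⟨p⟩ := hconn.preconnected r v
    exact ⟨p, fun w _ => Set.mem_univ w⟩
  have hout := strongMain (Set.univ.ncard) Set.univ r le_rfl (Set.mem_univ r) H
  have hstar : StarO G Set.univ r := by
    rcases hout with h | h
    · exact path_to_star h (by omega)
    · exact h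
  obtain ⟨x, L, _, _, hadjL, hL2, hcond⟩ := hstar
  have hEq : (Set.univ : Set V) \ ({x} ∪ L) = ({x} ∪ L : Set V)ᶜ := by
    rw [Set.compl_eq_univ_diff]
  rw [hEq] at hcond
  refine ⟨x, L, fun y hy => hadjL y hy, hL2, ?_⟩
  rintro c d ⟨u, v, huv, rfl⟩ ⟨u', v', hu'v', rfl⟩
  have hG : G.Adj ↑u ↑v := huv
  have hG' : G.Adj ↑u' ↑v' := hu'v'
  have h1 := hcond u.1 v.1 u.2 v.2 hG
  have h2 := hcond u'.1 v'.1 u'.2 v'.2 hG'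
  have hrB : r ∈ ({x} ∪ L : Set V)ᶜ := rw_right h1
  have r1 := rw_reachable h1 u.2 hrB
  have r2 := rw_reachable h2 u'.2 hrB
  have e1 : (G.induce (({x} ∪ L : Set V))ᶜ).connectedComponentMk u
      = (G.induce (({x} ∪ L : Set V))ᶜ).connectedComponentMk ⟨r, hrB⟩ :=
    ConnectedComponent.sound r1
  have e2 : (G.induce (({x} ∪ L : Set V))ᶜ).connectedComponentMk u'
      = (G.induce (({x} ∪ L : Set V))ᶜ).connectedComponentMk ⟨r, hrB⟩ :=
    ConnectedComponent.sound r2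
  rw [e1, e2]
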